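/- There exists a graded morphism of Hopf algebras ψ: (ℋ,·,Δ) → (T(ℬ),⧢,Δ̄), i.e. a linear map with ψ(ℋ_{(m)}) ⊆ T(ℬ)_{(m)} for all m ≥ 0, ψ(h₁h₂) = ψ(h₁)⧢ψ(h₂) for all h₁,h₂ ∈ ℋ, and Δ̄ψ(h) = (ψ⊗ψ)Δh for all h ∈ ℋ, such that for every n ≥ 1 and every tree τ with |τ| ≤ n one has ψ(τ) = τ + ψ_{n−1}(τ), where ψ_{n−1} denotes the composition of ψ with the projection onto T(ℬ_{n−1}). -/

import Mathlib

open scoped TensorProduct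
open scoped Classical

noncomputable section

/-! ### Labelled rooted trees with unordered branches

`TreeData A` axiomatizes the set `𝒯` of nonempty rooted trees with finitely many
vertices, each vertex labelled from the alphabet `A`, with unordered branches:
`attach m a = [τ₁ ⋯ τₘ]_a` attaches the forest (multiset of trees) `m` to a new
root labelled `a`, and every tree arises uniquely in this way; `size τ = |τ|` is
the number of vertices.  These conditions pin the structure down uniquely. -/
structure TreeData (A : Type) : Type 1 where
  T : Type
  size : T → ℕ
  size_pos : ∀ τ, 0 < size τ
  attach : (T →₀ ℕ) → A → T
  attach_bijective : Function.Bijective fun p : (T →₀ ℕ) × A => attach p.1 p.2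
  size_attach : ∀ m a, size (attach m a) = 1 + m.sum fun τ k => k * size τ

namespace TreeData

variable {A : Type} (TD : TreeData A)

/-- the single-vertex tree `•_a` -/
def leaf (a : A) : TD.T := TD.attach 0 a

/-- The Connes–Kreimer Hopf algebra `ℋ`: the free commutative polynomial
`ℝ`-algebra on the trees, with linear basis the forests (monomials). -/
abbrev H : Type := MvPolynomial TD.T ℝ

/-- the grade `|τ₁ ⋯ τₙ| = |τ₁| + ⋯ + |τₙ|` of a forest -/
def grade (m : TD.T →₀ ℕ) : ℕ := m.sum fun τ k => k * TD.size τ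

/-- the basis monomial of `ℋ` corresponding to a forest -/
def mono (m : TD.T →₀ ℕ) : TD.H := MvPolynomial.monomial m (1 : ℝ)

/-- the grafting operator `B₊_a`, sending a forest `τ₁ ⋯ τₘ` to `[τ₁ ⋯ τₘ]_a` -/
def Bplus (a : A) : TD.H →ₗ[ℝ] TD.H :=
  (MvPolynomial.basisMonomials TD.T ℝ).constr ℝ fun m =>
    TD.mono (Finsupp.single (TD.attach m a) 1)

/-- `ℋ*`, the full linear dual of `ℋ`: formal series in the dual basis of forests -/
abbrev Dual : Type := (TD.T →₀ ℕ) → ℝ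

/-- the pairing `⟨f, h⟩` of `f ∈ ℋ*` with `h ∈ ℋ` -/
def pairL (f : TD.Dual) : TD.H →ₗ[ℝ] ℝ :=
  (MvPolynomial.basisMonomials TD.T ℝ).constr ℝ f

/-- the dual basis element of `ℋ*` corresponding to a forest -/
def dualForest (m : TD.T →₀ ℕ) : TD.Dual := fun m' => if m' = m then 1 else 0

/-- the counit `1* ∈ ℋ*` -/
def unitD : TD.Dual := fun m => if m = 0 then 1 else 0

/-- the subspace `ℋ_n ⊆ ℋ` spanned by the forests of grade at most `n` -/
def Hn (n : ℕ) : Submodule ℝ TD.H :=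
  Submodule.span ℝ {p : TD.H | ∃ m : TD.T →₀ ℕ, TD.grade m ≤ n ∧ p = TD.mono m}

/-- `g` is a character of `ℋ_N` (an element of the truncated group `G_N(ℋ)`):
`⟨g,1⟩ = 1` and `⟨g, h₁h₂⟩ = ⟨g,h₁⟩⟨g,h₂⟩` whenever `|h₁| + |h₂| ≤ N`. -/
def IsCharN (N : ℕ) (g : TD.Dual) : Prop :=
  g 0 = 1 ∧ (∀ m, ¬TD.grade m ≤ N → g m = 0) ∧
    ∀ m₁ m₂, TD.grade m₁ + TD.grade m₂ ≤ N → g (m₁ + m₂) = g m₁ * g m₂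

/-- `h ∈ ℋ*` is a `δ`-primitive: `δh = 1 ⊗ h + h ⊗ 1`, i.e.
`⟨h, xy⟩ = ⟨1, x⟩⟨h, y⟩ + ⟨h, x⟩⟨1, y⟩` for all `x, y ∈ ℋ`. -/
def IsPrim (f : TD.Dual) : Prop :=
  ∀ p q : TD.H, TD.pairL f (p * q) =
    TD.pairL TD.unitD p * TD.pairL f q + TD.pairL f p * TD.pairL TD.unitD q

/-- `g ∈ ℋ*` is group-like: `δg = g ⊗ g`, i.e. `⟨g, xy⟩ = ⟨g, x⟩⟨g, y⟩`. -/
def IsGroupLike (g : TD.Dual) : Prop :=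
  ∀ p q : TD.H, TD.pairL g (p * q) = TD.pairL g p * TD.pairL g q

/-- the linear tree with root labelled `a` and the labels of `l` going up the chain -/
def chainUp : A → List A → TD.T
  | a, [] => TD.leaf a
  | a, b :: l => TD.attach (Finsupp.single (chainUp b l) 1) a

/-- the inclusion `ι : T(ℝᵈ) → ℋ` on basis words: the word `i₁ ⋯ i_k` is sent to the
(forest consisting of the) linear tree with `i₁` at the top down to `i_k` at the root -/
def iotaForest (w : List A) : TD.T →₀ ℕ :=
  match w.reverse with
  | [] => 0
  | a :: l => Finsupp.single (TD.chainUp a l) 1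

/-- `F` is the family of elementary differentials (Butcher coefficients) `f_τ`
associated to the vector fields `f_a`: `f_{[τ₁⋯τₙ]_a} = Dⁿf_a : (f_{τ₁},…,f_{τₙ})`. -/
def IsElemDiff (e : ℕ) (f : A → (Fin e → ℝ) → Fin e → ℝ)
    (F : TD.T → (Fin e → ℝ) → Fin e → ℝ) : Prop :=
  ∀ (m : TD.T →₀ ℕ) (a : A) (y : Fin e → ℝ) (α : Fin e),
    F (TD.attach m a) y α =
      iteratedFDeriv ℝ m.toMultiset.toList.length (fun x => f a x α) y
        (fun j => F (m.toMultiset.toList.get j) y)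

/-- `f_h` on the forest basis: `f_1 = Id`, `f_τ = F τ` on trees, and `f` vanishes on
nontrivial forest products. -/
def forestElem {e : ℕ} (F : TD.T → (Fin e → ℝ) → Fin e → ℝ)
    (m : TD.T →₀ ℕ) (y : Fin e → ℝ) (α : Fin e) : ℝ :=
  if m = 0 then y α
  else if h : ∃ τ : TD.T, m = Finsupp.single τ 1 then F h.choose y α else 0

end TreeData

/-- The Connes–Kreimer coproduct: the algebra morphism `Δ : ℋ → ℋ ⊗ ℋ` determined
recursively by `Δ1 = 1 ⊗ 1` and
`Δ[τ₁⋯τₘ]_a = [τ₁⋯τₘ]_a ⊗ 1 + Σ (τ₁⁽¹⁾⋯τₘ⁽¹⁾) ⊗ [τ₁⁽²⁾⋯τₘ⁽²⁾]_a`,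
i.e. by the cocycle property `Δ ∘ B₊_a = B₊_a ⊗ 1 + (id ⊗ B₊_a) ∘ Δ`. -/
structure CKCoproduct {A : Type} (TD : TreeData A) where
  Δ : TD.H →ₐ[ℝ] TD.H ⊗[ℝ] TD.H
  Δ_Bplus : ∀ (a : A) (p : TD.H),
    Δ (TD.Bplus a p) = TD.Bplus a p ⊗ₜ[ℝ] 1 + LinearMap.lTensor TD.H (TD.Bplus a) (Δ p)

namespace CKCoproduct

variable {A : Type} {TD : TreeData A} (CK : CKCoproduct TD)

/-- the convolution product on `ℋ*`: `⟨f ⋆ g, h⟩ = ⟨f ⊗ g, Δh⟩` -/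
def conv (f g : TD.Dual) : TD.Dual := fun m =>
  LinearMap.mul' ℝ ℝ (TensorProduct.map (TD.pairL f) (TD.pairL g) (CK.Δ (TD.mono m)))

/-- the convolution product, truncated beyond grade `N` -/
def convN (N : ℕ) (f g : TD.Dual) : TD.Dual := fun m =>
  if TD.grade m ≤ N then CK.conv f g m else 0

/-- truncated convolution powers -/
def convNPow (N : ℕ) (f : TD.Dual) (k : ℕ) : TD.Dual :=
  Nat.rec TD.unitD (fun _ ih => CK.convN N f ih) k

/-- the `⋆`-inverse in the truncated character group `G_N(ℋ)` -/
def starInv (N : ℕ) (g : TD.Dual) : TD.Dual := fun m =>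
  ∑ k ∈ Finset.range (N + 1), (-1 : ℝ) ^ k * CK.convNPow N (g - TD.unitD) k m

/-- the truncated `⋆`-logarithm `log⋆(1+x) = Σ_{k≥1} (−1)^{k−1} x^{⋆k}/k` -/
def logStar (N : ℕ) (g : TD.Dual) : TD.Dual := fun m =>
  ∑ k ∈ Finset.Icc 1 N, ((-1 : ℝ) ^ (k + 1) / k) * CK.convNPow N (g - TD.unitD) k m

/-- untruncated convolution powers -/
def convPow (f : TD.Dual) (k : ℕ) : TD.Dual :=
  Nat.rec TD.unitD (fun _ ih => CK.conv f ih) k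

/-- the `⋆`-exponential `exp⋆(h) = Σ_{k≥0} h^{⋆k}/k!` -/
def expStar (f : TD.Dual) : TD.Dual := fun m => ∑' k : ℕ, (Nat.factorial k : ℝ)⁻¹ * CK.convPow f k m

/-- the increments `𝐗_{st} = 𝐗_s⁻¹ ⋆ 𝐗_t` of a path in `G_N(ℋ)` -/
def inc (N : ℕ) (X : ℝ → TD.Dual) (s t : ℝ) : TD.Dual :=
  CK.convN N (CK.starInv N (X s)) (X t)

/-- a `γ`-Hölder branched rough path on `[0,T]`: a path in `G_N(ℋ)` with
`sup_{s≠t} |⟨𝐗_{st},τ⟩|/|t−s|^{γ|τ|} < ∞` for every forest `τ` of grade `≤ N`. -/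
def IsBRP (γ : ℝ) (N : ℕ) (Tf : ℝ) (X : ℝ → TD.Dual) : Prop :=
  (∀ t ∈ Set.Icc (0 : ℝ) Tf, TD.IsCharN N (X t)) ∧
    ∀ m : TD.T →₀ ℕ, TD.grade m ≤ N →
      ∃ C : ℝ, ∀ s ∈ Set.Icc (0 : ℝ) Tf, ∀ t ∈ Set.Icc (0 : ℝ) Tf,
        |CK.inc N X s t m| ≤ C * |t - s| ^ (γ * (TD.grade m : ℝ))

end CKCoproduct

/-! ### Words: the tensor algebra over a set of letters, with shuffle and
(de)concatenation structure.  An element of `T(V)` (or a functional on it) is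
represented by its family of coefficients on basis words. -/
namespace Words

variable {ι : Type}

/-- the empty word `1` (as a dual/coefficient family) -/
def unitW : List ι → ℝ := fun w => if w = [] then 1 else 0

/-- the basis element corresponding to a single word -/
def deltaW (w : List ι) : List ι → ℝ := fun w' => if w' = w then 1 else 0

/-- the multiset of shuffles (interleavings) of two words -/
def Shuf : List ι → List ι → Multiset (List ι)
  | [], l => {l}
  | a :: as, [] => {a :: as}
  | a :: as, b :: bs =>
      ((Shuf as (b :: bs)).map fun w => a :: w) + ((Shuf (a :: as) bs).map fun w => b :: w)
  termination_by l₁ l₂ => l₁.length + l₂.length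

/-- the subword of `w` along a set of positions -/
def subIdx (w : List ι) (S : Finset (Fin w.length)) : List ι :=
  (S.sort (· ≤ ·)).map w.get

/-- the shuffle product `⧢` (in coefficients) -/
def shufW (x y : List ι → ℝ) : List ι → ℝ := fun w =>
  ∑ S : Finset (Fin w.length), x (subIdx w S) * y (subIdx w Sᶜ)

/-- the concatenation (tensor) product of functionals, truncated beyond `N` letters -/
def concatConvN (N : ℕ) (f g : List ι → ℝ) : List ι → ℝ := fun w =>
  if w.length ≤ N then ∑ k ∈ Finset.range (w.length + 1), f (w.take k) * g (w.drop k) else 0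

/-- truncated concatenation powers -/
def concatPow (N : ℕ) (f : List ι → ℝ) (k : ℕ) : List ι → ℝ :=
  Nat.rec unitW (fun _ ih => concatConvN N f ih) k

/-- the inverse in the truncated group: `g⁻¹ = Σ_k (−1)^k (g − 1)^{⊗k}` -/
def concatInv (N : ℕ) (g : List ι → ℝ) : List ι → ℝ := fun w =>
  ∑ k ∈ Finset.range (N + 1), (-1 : ℝ) ^ k * concatPow N (g - unitW) k w

/-- the truncated tensor exponential -/
def expW (N : ℕ) (x : List ι → ℝ) : List ι → ℝ := fun w =>
  ∑ k ∈ Finset.range (N + 1), (Nat.factorial k : ℝ)⁻¹ * concatPow N x k w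

/-- the truncated tensor logarithm -/
def logW (N : ℕ) (x : List ι → ℝ) : List ι → ℝ := fun w =>
  ∑ k ∈ Finset.Icc 1 N, ((-1 : ℝ) ^ (k + 1) / k) * concatPow N (x - unitW) k w

/-- a shuffle character truncated at `N` letters, with letters restricted by `P`:
an element of the step-`N` free nilpotent group `G^{(N)}` over the letters. -/
def IsShuffleCharN (N : ℕ) (P : ι → Prop) (g : List ι → ℝ) : Prop :=
  g [] = 1 ∧ (∀ w : List ι, ¬(w.length ≤ N ∧ ∀ σ ∈ w, P σ) → g w = 0) ∧
    ∀ u v : List ι, u.length + v.length ≤ N → ((Shuf u v).map g).sum = g u * g v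

/-- the increments `𝐗̄_{st} = 𝐗̄_s⁻¹ ⊗ 𝐗̄_t` of a path in `G^{(N)}` -/
def gInc (N : ℕ) (X : ℝ → List ι → ℝ) (s t : ℝ) : List ι → ℝ :=
  concatConvN N (concatInv N (X s)) (X t)

/-- a `γ`-Hölder geometric rough path on `[0,T]`: a path in the step-`N` free
nilpotent group with `|⟨𝐗̄_{st}, w⟩| ≤ C|t−s|^{γk}` for words of `k ≤ N` letters. -/
def IsGeomRP (γ : ℝ) (N : ℕ) (Tf : ℝ) (P : ι → Prop) (X : ℝ → List ι → ℝ) : Prop :=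
  (∀ t ∈ Set.Icc (0 : ℝ) Tf, IsShuffleCharN N P (X t)) ∧
    ∀ w : List ι, w.length ≤ N →
      ∃ C : ℝ, ∀ s ∈ Set.Icc (0 : ℝ) Tf, ∀ t ∈ Set.Icc (0 : ℝ) Tf,
        |gInc N X s t w| ≤ C * |t - s| ^ (γ * (w.length : ℝ))

/-- the projection of `T(ℬ)` onto `T(ℬ_n)` (kill words with a letter of size `> n`) -/
def projW {A : Type} (TD : TreeData A) (n : ℕ) (x : List TD.T → ℝ) : List TD.T → ℝ :=
  fun w => if ∀ σ ∈ w, TD.size σ ≤ n then x w else 0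

/-- the weight of a word of trees -/
def wt {A : Type} (TD : TreeData A) (w : List TD.T) : ℕ := (w.map TD.size).sum

/-- the commutator bracket with respect to truncated concatenation -/
def bracketW (N : ℕ) (x y : List ι → ℝ) : List ι → ℝ :=
  concatConvN N x y - concatConvN N y x

/-- the free (step-`N`) Lie algebra generated by the letters satisfying `P` -/
def freeLie (N : ℕ) (P : ι → Prop) : Submodule ℝ (List ι → ℝ) :=
  sInf {S : Submodule ℝ (List ι → ℝ) |
    (∀ a : ι, P a → deltaW [a] ∈ S) ∧ ∀ x ∈ S, ∀ y ∈ S, bracketW N x y ∈ S}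

/-- the Lie ideal of the free Lie algebra generated by a set `G` -/
def lieIdealGen (N : ℕ) (P : ι → Prop) (G : Set (List ι → ℝ)) : Submodule ℝ (List ι → ℝ) :=
  sInf {S : Submodule ℝ (List ι → ℝ) |
    G ⊆ ↑S ∧ ∀ x ∈ freeLie N P, ∀ y ∈ S, bracketW N x y ∈ S}

/-- the homogeneous norm `ρ(x) = Σ_k ‖ℓ_k‖^{1/k}` where `log x = Σ ℓ_k` is graded by
the number of tensor factors and `‖·‖` is the Euclidean norm -/
def rhoNorm (N : ℕ) (x : List ι → ℝ) : ℝ :=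
  ∑ k ∈ Finset.Icc 1 N,
    Real.sqrt (∑' w : {w : List ι // w.length = k}, logW N x w.1 ^ 2) ^ ((k : ℝ)⁻¹)

end Words

namespace TreeData

variable {A : Type} (TD : TreeData A)

/-- `φ` is the Hopf algebra morphism `φ_g : ℋ → T(ℝᵈ)` determined by `φ_g(1) = 1`,
`φ_g([h]_a) = φ_g(h) ⊗ e_a` and `φ_g(h₁h₂) = φ_g(h₁) ⧢ φ_g(h₂)`. -/
def IsPhiG (φ : TD.H →ₗ[ℝ] (List A → ℝ)) : Prop :=
  φ (1 : TD.H) = Words.unitW ∧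
  (∀ p : TD.H, (Function.support (φ p)).Finite) ∧
  (∀ (a : A) (p : TD.H),
      φ (TD.Bplus a p) = fun w => if w.getLast? = some a then φ p w.dropLast else 0) ∧
  (∀ p q : TD.H, φ (p * q) = Words.shufW (φ p) (φ q))

/-- the coefficient `⟨h, φ(𝐙)_s⟩` of the composition of a smooth function with a
controlled rough path, for a nonempty forest `h`:
`Σ_{h₁⋯hₙ = h} (1/n!) Dⁿφ(Z_s) : (⟨h₁,𝐙_s⟩, …, ⟨hₙ,𝐙_s⟩)`. -/
def compC {e : ℕ} (φ : (Fin e → ℝ) → Fin e → ℝ) (Zs : Fin e → TD.H)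
    (h : TD.T →₀ ℕ) (α : Fin e) : ℝ :=
  ∑' p : Σ n : ℕ, Fin n → (TD.T →₀ ℕ),
    if (∀ j, p.2 j ≠ 0) ∧ (∑ j, p.2 j) = h ∧ 0 < p.1 then
      (Nat.factorial p.1 : ℝ)⁻¹ *
        iteratedFDeriv ℝ p.1 (fun x => φ x α) (fun β => MvPolynomial.coeff 0 (Zs β))
          (fun j β => MvPolynomial.coeff (p.2 j) (Zs β))
    else 0

/-- the full composition coefficient, `⟨1, φ(𝐙)_s⟩ = φ(Z_s)` on the empty forest -/
def compFull {e : ℕ} (φ : (Fin e → ℝ) → Fin e → ℝ) (Zs : Fin e → TD.H)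
    (h : TD.T →₀ ℕ) (α : Fin e) : ℝ :=
  if h = 0 then φ (fun β => MvPolynomial.coeff 0 (Zs β)) α else TD.compC φ Zs h α

end TreeData

namespace CKCoproduct

variable {A : Type} {TD : TreeData A} (CK : CKCoproduct TD)

/-- `ψ : (ℋ,·,Δ) → (T(ℬ),⧢,Δ̄)` is a graded morphism of Hopf algebras such that for
every tree `τ` with `|τ| ≤ n`, `ψ(τ) = τ + ψ_{n−1}(τ)` (where `ψ_{n−1}` is `ψ`
composed with the projection onto `T(ℬ_{n−1})`). -/
def IsPsi (ψ : TD.H →ₗ[ℝ] (List TD.T → ℝ)) : Prop :=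
  ψ (1 : TD.H) = Words.unitW ∧
  (∀ p : TD.H, (Function.support (ψ p)).Finite) ∧
  (∀ (m : TD.T →₀ ℕ) (w : List TD.T), Words.wt TD w ≠ TD.grade m → ψ (TD.mono m) w = 0) ∧
  (∀ p q : TD.H, ψ (p * q) = Words.shufW (ψ p) (ψ q)) ∧
  (∀ (p : TD.H) (u v : List TD.T),
      ψ p (u ++ v) =
        LinearMap.mul' ℝ ℝ
          (TensorProduct.map
            ((LinearMap.proj (R := ℝ) (φ := fun _ : List TD.T => ℝ) u).comp ψ)
            ((LinearMap.proj (R := ℝ) (φ := fun _ : List TD.T => ℝ) v).comp ψ)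
            (CK.Δ p))) ∧
  (∀ (n : ℕ) (τ : TD.T), TD.size τ ≤ n →
      ∀ w : List TD.T, (∃ σ ∈ w, n ≤ TD.size σ) →
        ψ (TD.mono (Finsupp.single τ 1)) w = if w = [τ] then 1 else 0)

/-- an `𝐗`-controlled rough path with coefficients indexed by forests of grade `≤ M`:
`|⟨h,𝐙_t⟩ − ⟨𝐗_{st} ⋆ h, 𝐙_s⟩| ≤ C |t−s|^{(N−|h|)γ}`. -/
def IsControlled (γ : ℝ) (N M : ℕ) (Tf : ℝ) {e : ℕ}
    (Xinc : ℝ → ℝ → TD.Dual) (Z : ℝ → Fin e → TD.H) : Prop :=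
  (∀ t ∈ Set.Icc (0 : ℝ) Tf, ∀ α, ∀ m : TD.T →₀ ℕ, ¬TD.grade m ≤ M →
      MvPolynomial.coeff m (Z t α) = 0) ∧
    ∀ m : TD.T →₀ ℕ, TD.grade m ≤ M →
      ∃ C : ℝ, ∀ s ∈ Set.Icc (0 : ℝ) Tf, ∀ t ∈ Set.Icc (0 : ℝ) Tf, ∀ α,
        |MvPolynomial.coeff m (Z t α) -
            TD.pairL (CK.conv (Xinc s t) (TD.dualForest m)) (Z s α)| ≤
          C * |t - s| ^ (γ * ((N : ℝ) - (TD.grade m : ℝ)))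

/-- `Y` (together with the controlled rough path `𝐘 = Z` above it) solves the RDE
`dY_t = Σ_a f_a(Y_t) dX^a_t` driven by the rough path with increments `Xinc`, in the
sense of the controlled-rough-path fixed point `𝐘_t − 𝐘_s = ∫_s^t f(𝐘_r)·dX_r`,
the rough integral being defined via the sewing lemma from the local approximations
`Σ_{a} Σ_{h} ⟨h, f_a(𝐘)_s⟩ ⟨𝐗_{st}, [h]_a⟩`. -/
def IsRDESolution (γ : ℝ) (N M : ℕ) (Tf : ℝ) {e : ℕ}
    (Xinc : ℝ → ℝ → TD.Dual) (f : A → (Fin e → ℝ) → Fin e → ℝ)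
    (Y : ℝ → Fin e → ℝ) (Z : ℝ → Fin e → TD.H) : Prop :=
  CK.IsControlled γ N M Tf Xinc Z ∧
  (∀ t ∈ Set.Icc (0 : ℝ) Tf, ∀ α, MvPolynomial.coeff 0 (Z t α) = Y t α) ∧
  (∀ t ∈ Set.Icc (0 : ℝ) Tf, ∀ α, ∀ (h : TD.T →₀ ℕ) (a : A),
      TD.grade (Finsupp.single (TD.attach h a) 1) ≤ M →
      MvPolynomial.coeff (Finsupp.single (TD.attach h a) 1) (Z t α) =
        TD.compFull (f a) (Z t) h α) ∧
  (∀ t ∈ Set.Icc (0 : ℝ) Tf, ∀ α, ∀ m : TD.T →₀ ℕ, m ≠ 0 →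
      (¬∃ τ : TD.T, m = Finsupp.single τ 1) → MvPolynomial.coeff m (Z t α) = 0) ∧
  ∃ r : ℝ → ℝ → Fin e → ℝ,
    (∀ s ∈ Set.Icc (0 : ℝ) Tf, ∀ t ∈ Set.Icc (0 : ℝ) Tf, ∀ α,
      Y t α - Y s α =
        (∑' p : (TD.T →₀ ℕ) × A,
          if TD.grade p.1 ≤ N - 1 then
            TD.compFull (f p.2) (Z s) p.1 α *
              Xinc s t (Finsupp.single (TD.attach p.1 p.2) 1)
          else 0) + r s t α) ∧
    ∀ ε > (0 : ℝ), ∃ δ > (0 : ℝ), ∀ s ∈ Set.Icc (0 : ℝ) Tf, ∀ t ∈ Set.Icc (0 : ℝ) Tf,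
      |t - s| ≤ δ → ∀ α, |r s t α| ≤ ε * |t - s|

/-- the homogeneous norm `∥g∥ = Σ_{τ ∈ 𝒯_N} |⟨log⋆ g, τ⟩|^{1/|τ|}` on `G_N(ℋ)` -/
def hNorm (N : ℕ) (g : TD.Dual) : ℝ :=
  ∑' τ : TD.T,
    if TD.size τ ≤ N then |CK.logStar N g (Finsupp.single τ 1)| ^ ((TD.size τ : ℝ)⁻¹) else 0

end CKCoproduct

/-! ### Auxiliary development for Statement 10: the Hairer–Kelly map -/

set_option synthInstance.maxHeartbeats 1000000
set_option maxHeartbeats 1600000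

namespace HKPsi

open MvPolynomial TensorProduct

variable {A : Type} {TD : TreeData A}

/-- coefficient extraction as a linear functional -/
def coeffL (m : TD.T →₀ ℕ) : TD.H →ₗ[ℝ] ℝ where
  toFun := MvPolynomial.coeff m
  map_add' p q := MvPolynomial.coeff_add m p q
  map_smul' c p := by simp [MvPolynomial.coeff_smul, smul_eq_mul]

@[simp] lemma coeffL_apply (m : TD.T →₀ ℕ) (p : TD.H) : coeffL m p = MvPolynomial.coeff m p := rfl

lemma X_eq_mono (τ : TD.T) : (X τ : TD.H) = TD.mono (Finsupp.single τ 1) := rfl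

lemma mono_mul (m₁ m₂ : TD.T →₀ ℕ) : TD.mono m₁ * TD.mono m₂ = TD.mono (m₁ + m₂) := by
  simp [TreeData.mono, MvPolynomial.monomial_mul]

lemma Bplus_mono (a : A) (m : TD.T →₀ ℕ) :
    TD.Bplus a (TD.mono m) = TD.mono (Finsupp.single (TD.attach m a) 1) := by
  have h : TD.mono m = (MvPolynomial.basisMonomials TD.T ℝ) m := by
    rw [MvPolynomial.coe_basisMonomials]
    rfl
  rw [TreeData.Bplus, h, Module.Basis.constr_basis]


lemma X_attach (a : A) (m : TD.T →₀ ℕ) :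
    (X (TD.attach m a) : TD.H) = TD.Bplus a (TD.mono m) := by
  rw [Bplus_mono, X_eq_mono]

lemma grade_add (m₁ m₂ : TD.T →₀ ℕ) : TD.grade (m₁ + m₂) = TD.grade m₁ + TD.grade m₂ :=
  Finsupp.sum_add_index' (by simp) (by intros; ring)

@[simp] lemma grade_zero : TD.grade 0 = 0 := Finsupp.sum_zero_index

lemma grade_single (τ : TD.T) (k : ℕ) : TD.grade (Finsupp.single τ k) = k * TD.size τ :=
  Finsupp.sum_single_index (by simp)

lemma size_le_grade {τ : TD.T} {m : TD.T →₀ ℕ} (h : τ ∈ m.support) : TD.size τ ≤ TD.grade m := by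
  have h1 : m τ * TD.size τ ≤ TD.grade m := by
    exact Finset.single_le_sum (f := fun σ => m σ * TD.size σ) (fun i _ => Nat.zero_le _) h
  have h2 : 1 ≤ m τ := Nat.one_le_iff_ne_zero.mpr (Finsupp.mem_support_iff.mp h)
  calc TD.size τ = 1 * TD.size τ := (one_mul _).symm
    _ ≤ m τ * TD.size τ := Nat.mul_le_mul_right _ h2
    _ ≤ TD.grade m := h1

lemma grade_eq_zero_iff (m : TD.T →₀ ℕ) : TD.grade m = 0 ↔ m = 0 := by
  constructor
  · intro h
    by_contra hm
    obtain ⟨τ, hτ⟩ := Finsupp.support_nonempty_iff.mpr hm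
    have := size_le_grade hτ
    have := TD.size_pos τ
    omega
  · rintro rfl; simp

lemma size_attach_eq (a : A) (m : TD.T →₀ ℕ) :
    TD.size (TD.attach m a) = 1 + TD.grade m := TD.size_attach m a

/-- the counit as an algebra morphism -/
def epsHom : TD.H →ₐ[ℝ] ℝ := MvPolynomial.aeval fun _ => (0 : ℝ)

lemma epsHom_apply (p : TD.H) : epsHom p = MvPolynomial.coeff 0 p := by
  have : (epsHom (TD := TD)).toLinearMap = coeffL 0 := by
    apply (MvPolynomial.basisMonomials TD.T ℝ).ext
    intro m
    rw [MvPolynomial.coe_basisMonomials]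
    simp only [AlgHom.toLinearMap_apply, coeffL_apply, epsHom]
    rw [MvPolynomial.aeval_monomial, MvPolynomial.coeff_monomial]
    by_cases hm : m = 0
    · subst hm; simp
    · rw [if_neg hm]
      obtain ⟨τ, hτ⟩ := Finsupp.support_nonempty_iff.mpr hm
      rw [Finsupp.prod, Finset.prod_eq_zero hτ (by
        simp [zero_pow (Finsupp.mem_support_iff.mp hτ)])]
      simp
  exact congrArg (fun f => f p) (congrArg DFunLike.coe this)

/-- pairing of two functionals against a tensor -/
def Phi (f g : TD.H →ₗ[ℝ] ℝ) : TD.H ⊗[ℝ] TD.H →ₗ[ℝ] ℝ :=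
  (LinearMap.mul' ℝ ℝ).comp (TensorProduct.map f g)

@[simp] lemma Phi_tmul (f g : TD.H →ₗ[ℝ] ℝ) (x y : TD.H) :
    Phi f g (x ⊗ₜ[ℝ] y) = f x * g y := by
  simp [Phi, LinearMap.mul'_apply]

variable (CK : CKCoproduct TD)

/-- the word functionals `ℓ_w = (π_{σ₁} ⊗ ⋯ ⊗ π_{σₖ}) ∘ Δ^{(k-1)}` -/
def ell : List TD.T → (TD.H →ₗ[ℝ] ℝ)
  | [] => coeffL 0
  | σ :: w => (Phi (coeffL (Finsupp.single σ 1)) (ell w)).comp CK.Δ.toLinearMap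

@[simp] lemma ell_nil : ell CK [] = coeffL (0 : TD.T →₀ ℕ) := rfl

lemma ell_cons (σ : TD.T) (w : List TD.T) (p : TD.H) :
    ell CK (σ :: w) p = Phi (coeffL (Finsupp.single σ 1)) (ell CK w) (CK.Δ p) := rfl

/-- the Hairer–Kelly map -/
def psi : TD.H →ₗ[ℝ] (List TD.T → ℝ) := LinearMap.pi fun w => ell CK w

@[simp] lemma psi_apply (p : TD.H) (w : List TD.T) : psi CK p w = ell CK w p := rfl

/-- strong induction on the size of a tree -/
lemma tree_size_induction (P : TD.T → Prop)
    (step : ∀ (m : TD.T →₀ ℕ) (a : A),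
      (∀ σ, TD.size σ < TD.size (TD.attach m a) → P σ) → P (TD.attach m a)) :
    ∀ τ, P τ := by
  have key : ∀ n τ, TD.size τ ≤ n → P τ := by
    intro n
    induction n with
    | zero => intro τ h; have := TD.size_pos τ; omega
    | succ n ih =>
      intro τ h
      obtain ⟨⟨m, a⟩, hp⟩ := TD.attach_bijective.surjective τ
      simp only [] at hp
      subst hp
      exact step m a fun σ hσ => ih σ (by omega)
  exact fun τ => key (TD.size τ) τ le_rfl

lemma algHom_congr_mono {S : Type} [CommSemiring S] [Algebra ℝ S] (f g : TD.H →ₐ[ℝ] S)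
    (m : TD.T →₀ ℕ) (h : ∀ τ ∈ m.support, f (X τ) = g (X τ)) :
    f (TD.mono m) = g (TD.mono m) := by
  rw [TreeData.mono, MvPolynomial.monomial_eq, MvPolynomial.C_1, one_mul]
  rw [map_finsuppProd, map_finsuppProd]
  exact Finsupp.prod_congr fun τ hτ => by rw [map_pow, map_pow, h τ hτ]

lemma size_lt_size_attach {m : TD.T →₀ ℕ} {a : A} {σ : TD.T} (hσ : σ ∈ m.support) :
    TD.size σ < TD.size (TD.attach m a) := by
  have := size_le_grade hσ
  rw [size_attach_eq]
  omega

section Counit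

/-- `(ε ⊗ id) ∘ Δ` as an algebra morphism -/
def counitMap : TD.H →ₐ[ℝ] TD.H :=
  ((Algebra.TensorProduct.lid ℝ TD.H).toAlgHom.comp
    (Algebra.TensorProduct.map epsHom (AlgHom.id ℝ TD.H))).comp CK.Δ

lemma counitMap_apply (p : TD.H) :
    counitMap CK p =
      (Algebra.TensorProduct.lid ℝ TD.H)
        ((Algebra.TensorProduct.map epsHom (AlgHom.id ℝ TD.H)) (CK.Δ p)) := rfl

lemma lid_eps_lTensor (a : A) (t : TD.H ⊗[ℝ] TD.H) :
    (Algebra.TensorProduct.lid ℝ TD.H)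
        ((Algebra.TensorProduct.map epsHom (AlgHom.id ℝ TD.H))
          ((LinearMap.lTensor TD.H (TD.Bplus a)) t)) =
      TD.Bplus a ((Algebra.TensorProduct.lid ℝ TD.H)
        ((Algebra.TensorProduct.map epsHom (AlgHom.id ℝ TD.H)) t)) := by
  induction t using TensorProduct.induction_on with
  | zero => simp only [LinearMap.map_zero, map_zero]
  | tmul x y =>
    simp [LinearMap.lTensor_tmul, Algebra.TensorProduct.map_tmul,
      Algebra.TensorProduct.lid_tmul, map_smul]
  | add u v hu hv => simp only [map_add, hu, hv]

lemma counit_id : counitMap CK = AlgHom.id ℝ TD.H := by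
  apply MvPolynomial.algHom_ext
  intro τ0
  refine tree_size_induction (fun τ => counitMap CK (X τ) = AlgHom.id ℝ TD.H (X τ)) ?_ τ0
  intro m a ih
  have hmono : counitMap CK (TD.mono m) = TD.mono m := by
    have := algHom_congr_mono (counitMap CK) (AlgHom.id ℝ TD.H) m
      (fun σ hσ => ih σ (size_lt_size_attach hσ))
    simpa using this
  rw [AlgHom.id_apply, X_attach, counitMap_apply, CK.Δ_Bplus, map_add, map_add]
  have h1 : (Algebra.TensorProduct.lid ℝ TD.H)
      ((Algebra.TensorProduct.map epsHom (AlgHom.id ℝ TD.H))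
        (TD.Bplus a (TD.mono m) ⊗ₜ[ℝ] 1)) = 0 := by
    rw [Algebra.TensorProduct.map_tmul]
    have : epsHom (TD.Bplus a (TD.mono m)) = 0 := by
      rw [← X_attach]; simp [epsHom]
    rw [this, TensorProduct.zero_tmul, map_zero]
  rw [h1, zero_add, lid_eps_lTensor, ← counitMap_apply, hmono]

lemma counit_pointwise (p : TD.H) :
    (Algebra.TensorProduct.lid ℝ TD.H)
      ((Algebra.TensorProduct.map epsHom (AlgHom.id ℝ TD.H)) (CK.Δ p)) = p := by
  rw [← counitMap_apply]
  rw [counit_id]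
  rfl

lemma Phi_eps_left_aux (g : TD.H →ₗ[ℝ] ℝ) (t : TD.H ⊗[ℝ] TD.H) :
    Phi (coeffL 0) g t =
      g ((Algebra.TensorProduct.lid ℝ TD.H)
        ((Algebra.TensorProduct.map epsHom (AlgHom.id ℝ TD.H)) t)) := by
  induction t using TensorProduct.induction_on with
  | zero => simp
  | tmul x y =>
    rw [Phi_tmul, Algebra.TensorProduct.map_tmul, Algebra.TensorProduct.lid_tmul,
      map_smul, epsHom_apply]
    simp [smul_eq_mul]
  | add u v hu hv => simp only [map_add, hu, hv]

/-- left counit identity: `⟨ε ⊗ g, Δp⟩ = g(p)` -/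
lemma Phi_eps_left (g : TD.H →ₗ[ℝ] ℝ) (p : TD.H) :
    Phi (coeffL 0) g (CK.Δ p) = g p := by
  rw [Phi_eps_left_aux, counit_pointwise]

end Counit

section Coassoc

/-- inclusion `x ↦ x ⊗ 1` -/
def jone : TD.H →ₗ[ℝ] TD.H ⊗[ℝ] TD.H := (TensorProduct.mk ℝ TD.H TD.H).flip 1

@[simp] lemma jone_apply (x : TD.H) : jone x = x ⊗ₜ[ℝ] (1 : TD.H) := rfl

lemma DeltaB (a : A) :
    CK.Δ.toLinearMap ∘ₗ TD.Bplus a =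
      (jone ∘ₗ TD.Bplus a) + (LinearMap.lTensor TD.H (TD.Bplus a)) ∘ₗ CK.Δ.toLinearMap := by
  apply LinearMap.ext
  intro x
  simpa using CK.Δ_Bplus a x

/-- `(Δ ⊗ id) ∘ Δ`, with associator -/
def coas1 : TD.H →ₐ[ℝ] TD.H ⊗[ℝ] (TD.H ⊗[ℝ] TD.H) :=
  ((Algebra.TensorProduct.assoc ℝ ℝ ℝ TD.H TD.H TD.H).toAlgHom.comp
    (Algebra.TensorProduct.map CK.Δ (AlgHom.id ℝ TD.H))).comp CK.Δ

/-- `(id ⊗ Δ) ∘ Δ` -/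
def coas2 : TD.H →ₐ[ℝ] TD.H ⊗[ℝ] (TD.H ⊗[ℝ] TD.H) :=
  (Algebra.TensorProduct.map (AlgHom.id ℝ TD.H) CK.Δ).comp CK.Δ

lemma coas1_apply (p : TD.H) :
    coas1 CK p = (Algebra.TensorProduct.assoc ℝ ℝ ℝ TD.H TD.H TD.H)
      ((Algebra.TensorProduct.map CK.Δ (AlgHom.id ℝ TD.H)) (CK.Δ p)) := rfl

lemma coas2_apply (p : TD.H) :
    coas2 CK p = (Algebra.TensorProduct.map (AlgHom.id ℝ TD.H) CK.Δ) (CK.Δ p) := rfl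

lemma E1 (a : A) (t : TD.H ⊗[ℝ] TD.H) :
    (Algebra.TensorProduct.assoc ℝ ℝ ℝ TD.H TD.H TD.H)
        ((LinearMap.lTensor TD.H (TD.Bplus a) t) ⊗ₜ[ℝ] (1 : TD.H)) =
      LinearMap.lTensor TD.H (jone ∘ₗ TD.Bplus a) t := by
  induction t using TensorProduct.induction_on with
  | zero => simp
  | tmul x y => simp [Algebra.TensorProduct.assoc_tmul]
  | add u v hu hv => rw [map_add, TensorProduct.add_tmul, map_add, hu, hv, map_add]

lemma E2 (a : A) (u : TD.H ⊗[ℝ] TD.H) (y : TD.H) :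
    (Algebra.TensorProduct.assoc ℝ ℝ ℝ TD.H TD.H TD.H) (u ⊗ₜ[ℝ] (TD.Bplus a y)) =
      LinearMap.lTensor TD.H (LinearMap.lTensor TD.H (TD.Bplus a))
        ((Algebra.TensorProduct.assoc ℝ ℝ ℝ TD.H TD.H TD.H) (u ⊗ₜ[ℝ] y)) := by
  induction u using TensorProduct.induction_on with
  | zero => simp
  | tmul x₁ x₂ => simp [Algebra.TensorProduct.assoc_tmul]
  | add u v hu hv => rw [TensorProduct.add_tmul, TensorProduct.add_tmul, map_add, map_add,
      hu, hv, map_add]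

lemma E2' (a : A) (t : TD.H ⊗[ℝ] TD.H) :
    (Algebra.TensorProduct.assoc ℝ ℝ ℝ TD.H TD.H TD.H)
        ((Algebra.TensorProduct.map CK.Δ (AlgHom.id ℝ TD.H))
          (LinearMap.lTensor TD.H (TD.Bplus a) t)) =
      LinearMap.lTensor TD.H (LinearMap.lTensor TD.H (TD.Bplus a))
        ((Algebra.TensorProduct.assoc ℝ ℝ ℝ TD.H TD.H TD.H)
          ((Algebra.TensorProduct.map CK.Δ (AlgHom.id ℝ TD.H)) t)) := by
  induction t using TensorProduct.induction_on with
  | zero => simp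
  | tmul x y =>
    rw [LinearMap.lTensor_tmul, Algebra.TensorProduct.map_tmul,
      Algebra.TensorProduct.map_tmul]
    exact E2 a (CK.Δ x) y
  | add u v hu hv => rw [map_add, map_add, map_add, hu, hv, map_add, map_add, map_add]

lemma E3 (a : A) (t : TD.H ⊗[ℝ] TD.H) :
    (Algebra.TensorProduct.map (AlgHom.id ℝ TD.H) CK.Δ)
        (LinearMap.lTensor TD.H (TD.Bplus a) t) =
      LinearMap.lTensor TD.H (CK.Δ.toLinearMap ∘ₗ TD.Bplus a) t := by
  induction t using TensorProduct.induction_on with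
  | zero => simp
  | tmul x y => simp
  | add u v hu hv => rw [map_add, map_add, hu, hv, map_add]

lemma E4 (a : A) (t : TD.H ⊗[ℝ] TD.H) :
    LinearMap.lTensor TD.H (LinearMap.lTensor TD.H (TD.Bplus a))
        ((Algebra.TensorProduct.map (AlgHom.id ℝ TD.H) CK.Δ) t) =
      LinearMap.lTensor TD.H ((LinearMap.lTensor TD.H (TD.Bplus a)) ∘ₗ CK.Δ.toLinearMap) t := by
  induction t using TensorProduct.induction_on with
  | zero => simp
  | tmul x y => simp
  | add u v hu hv => rw [map_add, map_add, hu, hv, map_add]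

lemma coassoc_algHom : coas1 CK = coas2 CK := by
  apply MvPolynomial.algHom_ext
  intro τ0
  refine tree_size_induction (fun τ => coas1 CK (X τ) = coas2 CK (X τ)) ?_ τ0
  intro m a ih
  have hmono := algHom_congr_mono (S := TD.H ⊗[ℝ] (TD.H ⊗[ℝ] TD.H)) (coas1 CK) (coas2 CK) m
    (fun σ hσ => ih σ (size_lt_size_attach hσ))
  rw [coas1_apply, coas2_apply] at hmono ⊢
  rw [X_attach, CK.Δ_Bplus, map_add, map_add, map_add]
  have t1L : (Algebra.TensorProduct.assoc ℝ ℝ ℝ TD.H TD.H TD.H)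
      ((Algebra.TensorProduct.map CK.Δ (AlgHom.id ℝ TD.H))
        (TD.Bplus a (TD.mono m) ⊗ₜ[ℝ] 1)) =
      TD.Bplus a (TD.mono m) ⊗ₜ[ℝ] ((1 : TD.H) ⊗ₜ[ℝ] (1 : TD.H))
        + LinearMap.lTensor TD.H (jone ∘ₗ TD.Bplus a) (CK.Δ (TD.mono m)) := by
    rw [Algebra.TensorProduct.map_tmul, AlgHom.id_apply, CK.Δ_Bplus,
      TensorProduct.add_tmul, map_add, Algebra.TensorProduct.assoc_tmul, E1]
  have t2L : (Algebra.TensorProduct.assoc ℝ ℝ ℝ TD.H TD.H TD.H)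
      ((Algebra.TensorProduct.map CK.Δ (AlgHom.id ℝ TD.H))
        (LinearMap.lTensor TD.H (TD.Bplus a) (CK.Δ (TD.mono m)))) =
      LinearMap.lTensor TD.H ((LinearMap.lTensor TD.H (TD.Bplus a)) ∘ₗ CK.Δ.toLinearMap)
        (CK.Δ (TD.mono m)) := by
    rw [E2', hmono, E4]
  have t1R : (Algebra.TensorProduct.map (AlgHom.id ℝ TD.H) CK.Δ)
      (TD.Bplus a (TD.mono m) ⊗ₜ[ℝ] 1) =
      TD.Bplus a (TD.mono m) ⊗ₜ[ℝ] ((1 : TD.H) ⊗ₜ[ℝ] (1 : TD.H)) := by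
    rw [Algebra.TensorProduct.map_tmul, AlgHom.id_apply, map_one,
      Algebra.TensorProduct.one_def]
  have t2R : (Algebra.TensorProduct.map (AlgHom.id ℝ TD.H) CK.Δ)
      (LinearMap.lTensor TD.H (TD.Bplus a) (CK.Δ (TD.mono m))) =
      LinearMap.lTensor TD.H (jone ∘ₗ TD.Bplus a) (CK.Δ (TD.mono m))
        + LinearMap.lTensor TD.H ((LinearMap.lTensor TD.H (TD.Bplus a)) ∘ₗ CK.Δ.toLinearMap)
            (CK.Δ (TD.mono m)) := by
    rw [E3, DeltaB, LinearMap.lTensor_add, LinearMap.add_apply]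
  rw [t1L, t2L, t1R, t2R]
  abel

lemma bridge_assoc (s : (TD.H ⊗[ℝ] TD.H) ⊗[ℝ] TD.H) :
    (Algebra.TensorProduct.assoc ℝ ℝ ℝ TD.H TD.H TD.H) s =
      (TensorProduct.assoc ℝ TD.H TD.H TD.H) s := by
  induction s using TensorProduct.induction_on with
  | zero => simp
  | tmul u z =>
    induction u using TensorProduct.induction_on with
    | zero => simp
    | tmul x y => rw [Algebra.TensorProduct.assoc_tmul, TensorProduct.assoc_tmul]
    | add u v hu hv => rw [TensorProduct.add_tmul, map_add, map_add, hu, hv]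
  | add u v hu hv => rw [map_add, map_add, hu, hv]

lemma bridge_mapL (t : TD.H ⊗[ℝ] TD.H) :
    (Algebra.TensorProduct.map CK.Δ (AlgHom.id ℝ TD.H)) t =
      LinearMap.rTensor TD.H CK.Δ.toLinearMap t := by
  induction t using TensorProduct.induction_on with
  | zero => simp
  | tmul x y => simp
  | add u v hu hv => rw [map_add, map_add, hu, hv]

lemma bridge_mapR (t : TD.H ⊗[ℝ] TD.H) :
    (Algebra.TensorProduct.map (AlgHom.id ℝ TD.H) CK.Δ) t =
      LinearMap.lTensor TD.H CK.Δ.toLinearMap t := by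
  induction t using TensorProduct.induction_on with
  | zero => simp
  | tmul x y => simp
  | add u v hu hv => rw [map_add, map_add, hu, hv]

lemma coassoc_pointwise (p : TD.H) :
    (TensorProduct.assoc ℝ TD.H TD.H TD.H)
        (LinearMap.rTensor TD.H CK.Δ.toLinearMap (CK.Δ p)) =
      LinearMap.lTensor TD.H CK.Δ.toLinearMap (CK.Δ p) := by
  have h := AlgHom.congr_fun (coassoc_algHom CK) p
  rw [coas1_apply, coas2_apply, bridge_mapL, bridge_mapR, bridge_assoc] at h
  exact h

/-- triple pairing `f ⊗ (g ⊗ h)` -/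
def T3 (f g h : TD.H →ₗ[ℝ] ℝ) : TD.H ⊗[ℝ] (TD.H ⊗[ℝ] TD.H) →ₗ[ℝ] ℝ :=
  (LinearMap.mul' ℝ ℝ).comp (TensorProduct.map f (Phi g h))

/-- triple pairing `(f ⊗ g) ⊗ h` -/
def T3' (f g h : TD.H →ₗ[ℝ] ℝ) : (TD.H ⊗[ℝ] TD.H) ⊗[ℝ] TD.H →ₗ[ℝ] ℝ :=
  (LinearMap.mul' ℝ ℝ).comp (TensorProduct.map (Phi f g) h)

lemma C1 (f g h : TD.H →ₗ[ℝ] ℝ) (t : TD.H ⊗[ℝ] TD.H) :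
    Phi f ((Phi g h).comp CK.Δ.toLinearMap) t =
      T3 f g h (LinearMap.lTensor TD.H CK.Δ.toLinearMap t) := by
  induction t using TensorProduct.induction_on with
  | zero => simp
  | tmul x y =>
    rw [Phi_tmul, LinearMap.lTensor_tmul]
    simp [T3, LinearMap.mul'_apply]
  | add u v hu hv => rw [map_add, map_add, hu, hv, map_add]

lemma C2 (f g h : TD.H →ₗ[ℝ] ℝ) (t : TD.H ⊗[ℝ] TD.H) :
    Phi ((Phi f g).comp CK.Δ.toLinearMap) h t =
      T3' f g h (LinearMap.rTensor TD.H CK.Δ.toLinearMap t) := by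
  induction t using TensorProduct.induction_on with
  | zero => simp
  | tmul x y =>
    rw [Phi_tmul, LinearMap.rTensor_tmul]
    simp [T3', LinearMap.mul'_apply]
  | add u v hu hv => rw [map_add, map_add, hu, hv, map_add]

lemma C3 (f g h : TD.H →ₗ[ℝ] ℝ) (s : (TD.H ⊗[ℝ] TD.H) ⊗[ℝ] TD.H) :
    T3' f g h s = T3 f g h ((TensorProduct.assoc ℝ TD.H TD.H TD.H) s) := by
  induction s using TensorProduct.induction_on with
  | zero => simp
  | tmul u z =>
    induction u using TensorProduct.induction_on with
    | zero => simp
    | tmul x y =>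
      rw [TensorProduct.assoc_tmul]
      simp [T3, T3', LinearMap.mul'_apply, mul_assoc]
    | add u v hu hv => rw [TensorProduct.add_tmul, map_add, map_add, hu, hv, map_add]
  | add u v hu hv => rw [map_add, map_add, hu, hv, map_add]

lemma conv_assoc (f g h : TD.H →ₗ[ℝ] ℝ) (p : TD.H) :
    Phi ((Phi f g).comp CK.Δ.toLinearMap) h (CK.Δ p) =
      Phi f ((Phi g h).comp CK.Δ.toLinearMap) (CK.Δ p) := by
  rw [C2, C3, coassoc_pointwise, ← C1]

lemma ell_append : ∀ (u v : List TD.T) (p : TD.H),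
    ell CK (u ++ v) p = Phi (ell CK u) (ell CK v) (CK.Δ p) := by
  intro u
  induction u with
  | nil => intro v p; exact (Phi_eps_left CK (ell CK v) p).symm
  | cons σ u ih =>
    intro v p
    have e1 : ell CK (u ++ v) = (Phi (ell CK u) (ell CK v)).comp CK.Δ.toLinearMap :=
      LinearMap.ext fun q => ih v q
    rw [List.cons_append, ell_cons, e1]
    have e2 : ell CK (σ :: u) = (Phi (coeffL (Finsupp.single σ 1)) (ell CK u)).comp
        CK.Δ.toLinearMap := rfl
    rw [e2]
    exact (conv_assoc CK (coeffL (Finsupp.single σ 1)) (ell CK u) (ell CK v) p).symm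

end Coassoc


section Grading

/-- forests of total grade `g` in `ℋ ⊗ ℋ` -/
def Sg (g : ℕ) : Submodule ℝ (TD.H ⊗[ℝ] TD.H) :=
  Submodule.span ℝ {x | ∃ m₁ m₂ : TD.T →₀ ℕ,
    TD.grade m₁ + TD.grade m₂ = g ∧ x = TD.mono m₁ ⊗ₜ[ℝ] TD.mono m₂}

lemma mono_zero : TD.mono (0 : TD.T →₀ ℕ) = (1 : TD.H) := by
  simp [TreeData.mono, MvPolynomial.monomial_zero']

lemma Sg_one : (1 : TD.H ⊗[ℝ] TD.H) ∈ Sg (TD := TD) 0 := by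
  apply Submodule.subset_span
  exact ⟨0, 0, by simp, by rw [Algebra.TensorProduct.one_def, mono_zero]⟩

lemma Sg_mul {g g' : ℕ} {x y : TD.H ⊗[ℝ] TD.H}
    (hx : x ∈ Sg (TD := TD) g) (hy : y ∈ Sg (TD := TD) g') : x * y ∈ Sg (TD := TD) (g + g') := by
  induction hy using Submodule.span_induction with
  | mem y hy =>
    obtain ⟨m₁', m₂', hg', rfl⟩ := hy
    induction hx using Submodule.span_induction with
    | mem x hx =>
      obtain ⟨m₁, m₂, hg, rfl⟩ := hx
      apply Submodule.subset_span
      refine ⟨m₁ + m₁', m₂ + m₂', ?_, ?_⟩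
      · rw [grade_add, grade_add]; omega
      · rw [Algebra.TensorProduct.tmul_mul_tmul, mono_mul, mono_mul]
    | zero => rw [zero_mul]; exact Submodule.zero_mem _
    | add x₁ x₂ _ _ h1 h2 => rw [add_mul]; exact Submodule.add_mem _ h1 h2
    | smul c x₁ _ h1 => rw [smul_mul_assoc]; exact Submodule.smul_mem _ _ h1
  | zero => rw [mul_zero]; exact Submodule.zero_mem _
  | add y₁ y₂ _ _ h1 h2 => rw [mul_add]; exact Submodule.add_mem _ h1 h2
  | smul c y₁ _ h1 => rw [mul_smul_comm]; exact Submodule.smul_mem _ _ h1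

lemma Sg_pow {g : ℕ} {x : TD.H ⊗[ℝ] TD.H} (hx : x ∈ Sg (TD := TD) g) (k : ℕ) :
    x ^ k ∈ Sg (TD := TD) (k * g) := by
  induction k with
  | zero => rw [pow_zero]; simpa using Sg_one
  | succ k ih =>
    rw [pow_succ]
    have := Sg_mul ih hx
    have he : k * g + g = (k + 1) * g := by ring
    rwa [he] at this

lemma Sg_lTensor (a : A) {g : ℕ} {x : TD.H ⊗[ℝ] TD.H} (hx : x ∈ Sg (TD := TD) g) :
    LinearMap.lTensor TD.H (TD.Bplus a) x ∈ Sg (TD := TD) (g + 1) := by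
  induction hx using Submodule.span_induction with
  | mem x hx =>
    obtain ⟨m₁, m₂, hg, rfl⟩ := hx
    rw [LinearMap.lTensor_tmul, Bplus_mono]
    apply Submodule.subset_span
    refine ⟨m₁, Finsupp.single (TD.attach m₂ a) 1, ?_, rfl⟩
    rw [grade_single, one_mul, size_attach_eq]
    omega
  | zero => rw [map_zero]; exact Submodule.zero_mem _
  | add x₁ x₂ _ _ h1 h2 => rw [map_add]; exact Submodule.add_mem _ h1 h2
  | smul c x₁ _ h1 => rw [map_smul]; exact Submodule.smul_mem _ _ h1

lemma gradeDelta (m : TD.T →₀ ℕ) : CK.Δ (TD.mono m) ∈ Sg (TD := TD) (TD.grade m) := by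
  suffices key : ∀ n (m : TD.T →₀ ℕ), TD.grade m ≤ n → CK.Δ (TD.mono m) ∈ Sg (TD := TD) (TD.grade m) by
    exact key (TD.grade m) m le_rfl
  intro n
  induction n with
  | zero =>
    intro m h
    have hm : m = 0 := (grade_eq_zero_iff m).mp (Nat.le_zero.mp h)
    subst hm
    rw [mono_zero, map_one, grade_zero]
    exact Sg_one
  | succ n ih =>
    intro m
    induction m using Finsupp.induction with
    | zero =>
      intro _
      rw [mono_zero, map_one, grade_zero]
      exact Sg_one
    | single_add τ k m' hτ hk ihm =>
      intro h
      have hgade : TD.grade (Finsupp.single τ k + m') = k * TD.size τ + TD.grade m' := by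
        rw [grade_add, grade_single]
      have hk1 : 1 ≤ k := Nat.one_le_iff_ne_zero.mpr hk
      have hsz : 1 ≤ TD.size τ := TD.size_pos τ
      -- Δ (X τ) ∈ Sg (size τ)
      obtain ⟨⟨m₀, a⟩, hp⟩ := TD.attach_bijective.surjective τ
      simp only [] at hp
      have hg0 : TD.grade m₀ ≤ n := by
        have : TD.size τ = 1 + TD.grade m₀ := by rw [← hp, size_attach_eq]
        have hτle : TD.size τ ≤ n + 1 := by
          have : TD.size τ ≤ k * TD.size τ := Nat.le_mul_of_pos_left _ hk1
          omega
        omega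
      have hΔX : CK.Δ (X τ : TD.H) ∈ Sg (TD := TD) (TD.size τ) := by
        rw [← hp, X_attach, CK.Δ_Bplus]
        apply Submodule.add_mem
        · apply Submodule.subset_span
          refine ⟨Finsupp.single (TD.attach m₀ a) 1, 0, ?_, ?_⟩
          · rw [grade_single, one_mul, grade_zero, add_zero]
          · rw [Bplus_mono, mono_zero]
        · have := Sg_lTensor a (ih m₀ hg0)
          have he : TD.grade m₀ + 1 = TD.size (TD.attach m₀ a) := by
            rw [size_attach_eq]; omega
          rwa [he] at this
      have hmono : TD.mono (Finsupp.single τ k + m') = (X τ : TD.H) ^ k * TD.mono m' := by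
        rw [MvPolynomial.X_pow_eq_monomial, TreeData.mono, TreeData.mono,
          MvPolynomial.monomial_mul, one_mul]
      have hm'le : TD.grade m' ≤ n + 1 := by omega
      have := Sg_mul (Sg_pow hΔX k) (ihm hm'le)
      rw [hmono, map_mul, map_pow, hgade]
      exact this

lemma Phi_vanish {g : ℕ} {x : TD.H ⊗[ℝ] TD.H} (hx : x ∈ Sg (TD := TD) g)
    (f h : TD.H →ₗ[ℝ] ℝ)
    (hf : ∀ m₁ m₂ : TD.T →₀ ℕ, TD.grade m₁ + TD.grade m₂ = g →
      f (TD.mono m₁) * h (TD.mono m₂) = 0) :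
    Phi f h x = 0 := by
  induction hx using Submodule.span_induction with
  | mem x hx =>
    obtain ⟨m₁, m₂, hg, rfl⟩ := hx
    rw [Phi_tmul]
    exact hf m₁ m₂ hg
  | zero => rw [map_zero]
  | add x₁ x₂ _ _ h1 h2 => rw [map_add, h1, h2, add_zero]
  | smul c x₁ _ h1 => rw [map_smul, h1, smul_zero]

lemma ell_grade : ∀ (w : List TD.T) (m : TD.T →₀ ℕ),
    Words.wt TD w ≠ TD.grade m → ell CK w (TD.mono m) = 0 := by
  intro w
  induction w with
  | nil =>
    intro m h
    have hm : m ≠ 0 := by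
      intro e; subst e; exact h (by simp [Words.wt, grade_zero])
    show coeffL 0 (TD.mono m) = 0
    rw [coeffL_apply, TreeData.mono, MvPolynomial.coeff_monomial, if_neg hm]
  | cons σ v ih =>
    intro m h
    rw [ell_cons]
    refine Phi_vanish (gradeDelta CK m) _ _ ?_
    intro m₁ m₂ hg
    by_cases h1 : m₁ = Finsupp.single σ 1
    · subst h1
      have hσ : TD.grade (Finsupp.single σ 1) = TD.size σ := by
        rw [grade_single, one_mul]
      have hwt : Words.wt TD (σ :: v) = TD.size σ + Words.wt TD v := by
        simp [Words.wt]
      have : Words.wt TD v ≠ TD.grade m₂ := by omega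
      rw [ih m₂ this, mul_zero]
    · have : coeffL (Finsupp.single σ 1) (TD.mono m₁) = 0 := by
        rw [coeffL_apply, TreeData.mono, MvPolynomial.coeff_monomial,
          if_neg h1]
      rw [this, zero_mul]

end Grading

section Shuffle

lemma coeff_zero_mul' (x y : TD.H) :
    MvPolynomial.coeff 0 (x * y) = MvPolynomial.coeff 0 x * MvPolynomial.coeff 0 y := by
  rw [MvPolynomial.coeff_mul, Finsupp.antidiagonal_zero, Finset.sum_singleton]

lemma coeff_single_mul (σ : TD.T) (x y : TD.H) :
    MvPolynomial.coeff (Finsupp.single σ 1) (x * y) =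
      MvPolynomial.coeff 0 x * MvPolynomial.coeff (Finsupp.single σ 1) y +
        MvPolynomial.coeff (Finsupp.single σ 1) x * MvPolynomial.coeff 0 y := by
  rw [MvPolynomial.coeff_mul, Finsupp.antidiagonal_single, Finset.sum_map]
  have h1 : Finset.HasAntidiagonal.antidiagonal (1 : ℕ) = {(0, 1), (1, 0)} := by decide
  rw [h1, show ({(0, 1), (1, 0)} : Finset (ℕ × ℕ)) = insert (0, 1) {(1, 0)} from rfl,
    Finset.sum_insert (by decide), Finset.sum_singleton]
  simp [Finsupp.single_zero]

lemma Phi_pi_mul (σ : TD.T) {κ : Type} [Fintype κ] (L R : κ → (TD.H →ₗ[ℝ] ℝ))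
    (ℓ : TD.H →ₗ[ℝ] ℝ) (hℓ : ∀ y y' : TD.H, ℓ (y * y') = ∑ i : κ, L i y * R i y')
    (t t' : TD.H ⊗[ℝ] TD.H) :
    Phi (coeffL (Finsupp.single σ 1)) ℓ (t * t') =
      ∑ i : κ, (Phi (coeffL 0) (L i) t * Phi (coeffL (Finsupp.single σ 1)) (R i) t' +
        Phi (coeffL (Finsupp.single σ 1)) (L i) t * Phi (coeffL 0) (R i) t') := by
  induction t using TensorProduct.induction_on with
  | zero => simp
  | add u v hu hv =>
    rw [add_mul, map_add, hu, hv, ← Finset.sum_add_distrib]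
    refine Finset.sum_congr rfl fun i _ => ?_
    rw [map_add, map_add]
    ring
  | tmul x y =>
    induction t' using TensorProduct.induction_on with
    | zero => simp
    | add u v hu hv =>
      rw [mul_add, map_add, hu, hv, ← Finset.sum_add_distrib]
      refine Finset.sum_congr rfl fun i _ => ?_
      rw [map_add, map_add]
      ring
    | tmul x' y' =>
      rw [Algebra.TensorProduct.tmul_mul_tmul, Phi_tmul]
      have hπ : coeffL (Finsupp.single σ 1) (x * x') =
          coeffL 0 x * coeffL (Finsupp.single σ 1) x' +
            coeffL (Finsupp.single σ 1) x * coeffL 0 x' := coeff_single_mul σ x x'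
      rw [hπ, hℓ y y']
      simp only [Phi_tmul]
      rw [Finset.mul_sum]
      refine Finset.sum_congr rfl fun i _ => ?_
      ring

/-! Combinatorics of subword indices under `Fin.succ` -/

lemma sort_map_succ {n : ℕ} (T : Finset (Fin n)) :
    Finset.sort (T.map (Fin.succEmb n)) (· ≤ ·) =
      (Finset.sort T (· ≤ ·)).map Fin.succ := by
  have hperm : (Finset.sort (T.map (Fin.succEmb n)) (· ≤ ·)).Perm
      ((Finset.sort T (· ≤ ·)).map Fin.succ) := by
    rw [← Multiset.coe_eq_coe]
    calc ((Finset.sort (T.map (Fin.succEmb n)) (· ≤ ·) : List (Fin (n + 1))) :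
          Multiset (Fin (n + 1)))
        = (T.map (Fin.succEmb n)).val := Finset.sort_eq _ _
      _ = T.val.map (Fin.succEmb n) := Finset.map_val _ _
      _ = Multiset.map Fin.succ ((Finset.sort T (· ≤ ·) : List (Fin n)) : Multiset (Fin n)) := by
          rw [Finset.sort_eq]; rfl
      _ = (((Finset.sort T (· ≤ ·)).map Fin.succ : List (Fin (n + 1))) :
          Multiset (Fin (n + 1))) := by rw [Multiset.map_coe]
  exact List.Perm.eq_of_pairwise' (Finset.pairwise_sort _ _)
    (List.Pairwise.map Fin.succ (fun a b h => Fin.succ_le_succ_iff.mpr h)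
      (Finset.pairwise_sort T (· ≤ ·))) hperm

lemma zero_notmem_map_succ {n : ℕ} (T : Finset (Fin n)) :
    (0 : Fin (n + 1)) ∉ T.map (Fin.succEmb n) := by
  intro hmem
  obtain ⟨i, _, h⟩ := Finset.mem_map.mp hmem
  exact Fin.succ_ne_zero i h

variable {ι : Type}

lemma get_cons_succ' (σ : ι) (v : List ι) (i : Fin v.length) :
    (σ :: v).get i.succ = v.get i := by
  rcases i with ⟨j, hj⟩
  rfl

lemma get_cons_zero' (σ : ι) (v : List ι) :
    (σ :: v).get (0 : Fin (v.length + 1)) = σ := rfl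

lemma subIdx_map_succ (σ : ι) (v : List ι) (T : Finset (Fin v.length)) :
    Words.subIdx (σ :: v) (T.map (Fin.succEmb v.length)) = Words.subIdx v T := by
  show List.map (fun i : Fin (v.length + 1) => (σ :: v).get i)
      (Finset.sort (T.map (Fin.succEmb v.length)) (· ≤ ·))
      = List.map v.get (Finset.sort T (· ≤ ·))
  rw [sort_map_succ, List.map_map]
  exact List.map_congr_left fun i _ => get_cons_succ' σ v i

lemma subIdx_insert_zero (σ : ι) (v : List ι) (T : Finset (Fin v.length)) :
    Words.subIdx (σ :: v) (insert (0 : Fin (v.length + 1)) (T.map (Fin.succEmb v.length))) =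
      σ :: Words.subIdx v T := by
  show List.map (fun i : Fin (v.length + 1) => (σ :: v).get i)
      (Finset.sort (insert (0 : Fin (v.length + 1)) (T.map (Fin.succEmb v.length))) (· ≤ ·))
      = σ :: List.map v.get (Finset.sort T (· ≤ ·))
  rw [Finset.sort_insert _ (fun b _ => Fin.zero_le b) (zero_notmem_map_succ T),
    List.map_cons, sort_map_succ, List.map_map]
  have h2 : List.map ((fun i : Fin (v.length + 1) => (σ :: v).get i) ∘ Fin.succ)
      (Finset.sort T (· ≤ ·)) = List.map v.get (Finset.sort T (· ≤ ·)) :=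
    List.map_congr_left fun i _ => get_cons_succ' σ v i
  rw [h2]
  rfl

lemma compl_map_succ {n : ℕ} (T : Finset (Fin n)) :
    (T.map (Fin.succEmb n))ᶜ = insert 0 (Tᶜ.map (Fin.succEmb n)) := by
  ext x
  constructor
  · intro hx
    rcases Fin.eq_zero_or_eq_succ x with rfl | ⟨i, rfl⟩
    · exact Finset.mem_insert_self _ _
    · have h : i ∉ T := fun hi =>
        (Finset.mem_compl.mp hx) (Finset.mem_map.mpr ⟨i, hi, rfl⟩)
      exact Finset.mem_insert_of_mem (Finset.mem_map.mpr ⟨i, Finset.mem_compl.mpr h, rfl⟩)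
  · intro hx
    rw [Finset.mem_compl]
    intro hmem
    obtain ⟨i, hi, he⟩ := Finset.mem_map.mp hmem
    rcases Finset.mem_insert.mp hx with h0 | hmap
    · subst h0
      exact Fin.succ_ne_zero i he
    · obtain ⟨j, hj, hje⟩ := Finset.mem_map.mp hmap
      have hji : j = i := Fin.succ_injective n (hje.trans he.symm)
      rw [hji] at hj
      exact Finset.mem_compl.mp hj hi

lemma compl_insert_zero {n : ℕ} (T : Finset (Fin n)) :
    (insert 0 (T.map (Fin.succEmb n)))ᶜ = Tᶜ.map (Fin.succEmb n) := by
  have := compl_map_succ Tᶜ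
  rw [compl_compl] at this
  rw [← this, compl_compl]

lemma preimage_succ_map {n : ℕ} (T : Finset (Fin n)) :
    (T.map (Fin.succEmb n)).preimage Fin.succ (Fin.succ_injective n).injOn = T := by
  ext i
  rw [Finset.mem_preimage, Finset.mem_map]
  constructor
  · rintro ⟨j, hj, hji⟩
    rwa [← Fin.succ_injective n hji]
  · intro hi; exact ⟨i, hi, rfl⟩

lemma preimage_succ_insert {n : ℕ} (T : Finset (Fin n)) :
    (insert 0 (T.map (Fin.succEmb n))).preimage Fin.succ (Fin.succ_injective n).injOn = T := by
  ext i
  rw [Finset.mem_preimage, Finset.mem_insert]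
  constructor
  · rintro (h | h)
    · exact absurd h (Fin.succ_ne_zero i)
    · obtain ⟨j, hj, hji⟩ := Finset.mem_map.mp h
      rwa [← Fin.succ_injective n hji]
  · intro hi; exact Or.inr (Finset.mem_map.mpr ⟨i, hi, rfl⟩)

lemma map_preimage_succ {n : ℕ} (S : Finset (Fin (n + 1))) (h0 : (0 : Fin (n + 1)) ∉ S) :
    (S.preimage Fin.succ (Fin.succ_injective n).injOn).map (Fin.succEmb n) = S := by
  ext x
  refine Fin.cases ?_ ?_ x
  · simp only [zero_notmem_map_succ, false_iff]
    intro h; exact h0 h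
  · intro i
    rw [Finset.mem_map]
    constructor
    · rintro ⟨j, hj, hji⟩
      rw [Finset.mem_preimage] at hj
      have : j = i := Fin.succ_injective n hji
      subst this; exact hj
    · intro hi
      exact ⟨i, Finset.mem_preimage.mpr hi, rfl⟩

lemma insert_map_preimage_succ {n : ℕ} (S : Finset (Fin (n + 1))) (h0 : (0 : Fin (n + 1)) ∈ S) :
    insert 0 ((S.preimage Fin.succ (Fin.succ_injective n).injOn).map (Fin.succEmb n)) = S := by
  ext x
  refine Fin.cases ?_ ?_ x
  · simp [h0]
  · intro i
    rw [Finset.mem_insert, Finset.mem_map]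
    constructor
    · rintro (h | ⟨j, hj, hji⟩)
      · exact absurd h (Fin.succ_ne_zero i)
      · rw [Finset.mem_preimage] at hj
        have : j = i := Fin.succ_injective n hji
        subst this; exact hj
    · intro hi
      exact Or.inr ⟨i, Finset.mem_preimage.mpr hi, rfl⟩

lemma sum_finset_fin_succ {n : ℕ} (F : Finset (Fin (n + 1)) → ℝ) :
    ∑ S : Finset (Fin (n + 1)), F S =
      ∑ T : Finset (Fin n),
        (F (T.map (Fin.succEmb n)) + F (insert 0 (T.map (Fin.succEmb n)))) := by
  rw [Finset.sum_add_distrib]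
  rw [← Finset.sum_filter_add_sum_filter_not Finset.univ
    (fun S : Finset (Fin (n + 1)) => (0 : Fin (n + 1)) ∉ S) F]
  congr 1
  · refine (Finset.sum_nbij'
      (i := fun S => S.preimage Fin.succ (Fin.succ_injective n).injOn)
      (j := fun T => T.map (Fin.succEmb n)) ?_ ?_ ?_ ?_ ?_).symm.symm
    · intro S _; exact Finset.mem_univ _
    · intro T _
      simp only [Finset.mem_filter]
      exact ⟨Finset.mem_univ _, zero_notmem_map_succ T⟩
    · intro S hS
      simp only [Finset.mem_filter] at hS
      exact map_preimage_succ S hS.2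
    · intro T _; exact preimage_succ_map T
    · intro S hS
      simp only [Finset.mem_filter] at hS
      rw [map_preimage_succ S hS.2]
  · refine (Finset.sum_nbij'
      (i := fun S => S.preimage Fin.succ (Fin.succ_injective n).injOn)
      (j := fun T => insert 0 (T.map (Fin.succEmb n))) ?_ ?_ ?_ ?_ ?_).symm.symm
    · intro S _; exact Finset.mem_univ _
    · intro T _
      simp only [Finset.mem_filter, not_not]
      exact ⟨Finset.mem_univ _, Finset.mem_insert_self _ _⟩
    · intro S hS
      simp only [Finset.mem_filter, not_not] at hS
      exact insert_map_preimage_succ S hS.2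
    · intro T _; exact preimage_succ_insert T
    · intro S hS
      simp only [Finset.mem_filter, not_not] at hS
      rw [insert_map_preimage_succ S hS.2]

/-- the Hairer–Kelly map is multiplicative into the shuffle algebra -/
lemma ell_mul : ∀ (w : List TD.T) (p q : TD.H),
    ell CK w (p * q) = ∑ S : Finset (Fin w.length),
      ell CK (Words.subIdx w S) p * ell CK (Words.subIdx w Sᶜ) q := by
  intro w
  induction w with
  | nil =>
    intro p q
    have hsub : ∀ S : Finset (Fin (List.length ([] : List TD.T))),
        Words.subIdx ([] : List TD.T) S = [] := by
      intro S
      unfold Words.subIdx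
      cases h : Finset.sort S (· ≤ ·) with
      | nil => rfl
      | cons a l => exact Fin.elim0 a
    haveI : IsEmpty (Fin (List.length ([] : List TD.T))) := Fin.isEmpty
    rw [Fintype.sum_eq_single (∅ : Finset (Fin (List.length ([] : List TD.T))))
      (fun b hb => absurd (Finset.eq_empty_of_isEmpty b) hb)]
    rw [hsub, hsub]
    exact coeff_zero_mul' p q
  | cons σ v ih =>
    intro p q
    show ell CK (σ :: v) (p * q) = ∑ S : Finset (Fin (v.length + 1)),
      ell CK (Words.subIdx (σ :: v) S) p * ell CK (Words.subIdx (σ :: v) Sᶜ) q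
    rw [ell_cons, map_mul]
    rw [Phi_pi_mul σ (fun S : Finset (Fin v.length) => ell CK (Words.subIdx v S))
      (fun S => ell CK (Words.subIdx v Sᶜ)) (ell CK v) (fun y y' => ih y y')
      (CK.Δ p) (CK.Δ q)]
    rw [sum_finset_fin_succ (n := v.length) (fun S =>
      ell CK (Words.subIdx (σ :: v) S) p * ell CK (Words.subIdx (σ :: v) Sᶜ) q)]
    refine Finset.sum_congr rfl fun T _ => ?_
    rw [Phi_eps_left CK _ p, Phi_eps_left CK _ q]
    simp only [compl_map_succ, compl_insert_zero]
    rw [subIdx_map_succ σ v T, subIdx_map_succ σ v Tᶜ, subIdx_insert_zero σ v T,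
      subIdx_insert_zero σ v Tᶜ]
    rw [← ell_cons, ← ell_cons]

end Shuffle

section Finiteness

lemma wt_cons (σ : TD.T) (w : List TD.T) :
    Words.wt TD (σ :: w) = TD.size σ + Words.wt TD w := by simp [Words.wt]

lemma wt_append (u v : List TD.T) :
    Words.wt TD (u ++ v) = Words.wt TD u + Words.wt TD v := by simp [Words.wt]

lemma size_le_wt {σ : TD.T} {w : List TD.T} (h : σ ∈ w) : TD.size σ ≤ Words.wt TD w :=
  List.single_le_sum (l := w.map TD.size) (fun x _ => Nat.zero_le x) _
    (List.mem_map_of_mem h)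

lemma length_le_wt (w : List TD.T) : w.length ≤ Words.wt TD w := by
  induction w with
  | nil => simp [Words.wt]
  | cons σ v ih =>
    rw [wt_cons]
    have := TD.size_pos σ
    simp only [List.length_cons]
    omega

lemma wt_eq_zero {w : List TD.T} (h : Words.wt TD w = 0) : w = [] := by
  cases w with
  | nil => rfl
  | cons σ v =>
    rw [wt_cons] at h
    have := TD.size_pos σ
    omega

lemma finite_trees [Finite A] (n : ℕ) : {τ : TD.T | TD.size τ ≤ n}.Finite := by
  induction n with
  | zero =>
    convert Set.finite_empty
    ext τ
    have := TD.size_pos τ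
    simp only [Set.mem_setOf_eq, Set.mem_empty_iff_false, iff_false]
    omega
  | succ n ih =>
    have hM : {m : TD.T →₀ ℕ | ↑m.support ⊆ {τ : TD.T | TD.size τ ≤ n} ∧ ∀ σ, m σ ≤ n}.Finite := by
      haveI : Finite {τ : TD.T | TD.size τ ≤ n} := ih.to_subtype
      have hinj : Set.InjOn (fun (m : TD.T →₀ ℕ) => fun s : {τ : TD.T | TD.size τ ≤ n} => m s.1)
          {m | ↑m.support ⊆ {τ : TD.T | TD.size τ ≤ n} ∧ ∀ σ, m σ ≤ n} := by
        intro m1 h1 m2 h2 he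
        ext τ
        by_cases hτ : τ ∈ {τ : TD.T | TD.size τ ≤ n}
        · exact congrFun he ⟨τ, hτ⟩
        · have e1 : m1 τ = 0 := by
            by_contra h
            exact hτ (h1.1 (Finsupp.mem_support_iff.mpr h))
          have e2 : m2 τ = 0 := by
            by_contra h
            exact hτ (h2.1 (Finsupp.mem_support_iff.mpr h))
          rw [e1, e2]
      apply Set.Finite.of_finite_image ?_ hinj
      apply Set.Finite.subset (Set.Finite.pi
        (fun _ : {τ : TD.T | TD.size τ ≤ n} => Set.finite_Iic n))
      rintro f ⟨m, hm, rfl⟩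
      intro s _
      exact hm.2 s.1
    have himg : {τ : TD.T | TD.size τ ≤ n + 1} ⊆
        (fun p : (TD.T →₀ ℕ) × A => TD.attach p.1 p.2) ''
          ({m | ↑m.support ⊆ {τ : TD.T | TD.size τ ≤ n} ∧ ∀ σ, m σ ≤ n} ×ˢ Set.univ) := by
      intro τ hτ
      simp only [Set.mem_setOf_eq] at hτ
      obtain ⟨⟨m, a⟩, hp⟩ := TD.attach_bijective.surjective τ
      simp only [] at hp
      have hsz : TD.size τ = 1 + TD.grade m := by rw [← hp, size_attach_eq]
      refine ⟨(m, a), ⟨⟨?_, ?_⟩, Set.mem_univ a⟩, hp⟩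
      · intro σ hσ
        show TD.size σ ≤ n
        simp only [Finset.mem_coe] at hσ
        have h1 : TD.size σ ≤ TD.grade m := size_le_grade hσ
        omega
      · intro σ
        show m σ ≤ n
        by_cases hσ : σ ∈ m.support
        · have h1 : m σ * TD.size σ ≤ TD.grade m :=
            Finset.single_le_sum (f := fun σ => m σ * TD.size σ) (fun i _ => Nat.zero_le _) hσ
          have h2 : 1 ≤ TD.size σ := TD.size_pos σ
          have h3 : m σ ≤ m σ * TD.size σ := Nat.le_mul_of_pos_right _ h2
          omega
        · simp [Finsupp.notMem_support_iff.mp hσ]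
    exact Set.Finite.subset (Set.Finite.image _ (hM.prod Set.finite_univ)) himg

lemma finite_words {S : Set TD.T} (hS : S.Finite) (k : ℕ) :
    {w : List TD.T | (∀ σ ∈ w, σ ∈ S) ∧ w.length ≤ k}.Finite := by
  induction k with
  | zero =>
    apply Set.Finite.subset (Set.finite_singleton ([] : List TD.T))
    rintro w ⟨_, hl⟩
    simp only [Set.mem_singleton_iff]
    exact List.length_eq_zero_iff.mp (Nat.le_zero.mp hl)
  | succ k ih =>
    apply Set.Finite.subset (Set.Finite.insert ([] : List TD.T)
      (Set.Finite.image (fun p : TD.T × List TD.T => p.1 :: p.2) (hS.prod ih)))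
    rintro w ⟨hw, hl⟩
    cases w with
    | nil => exact Set.mem_insert _ _
    | cons σ v =>
      refine Set.mem_insert_of_mem _ ⟨(σ, v), ⟨hw σ (by simp), ?_, ?_⟩, rfl⟩
      · exact fun τ hτ => hw τ (by simp [hτ])
      · simpa using hl

lemma finite_wt_le [Finite A] (G : ℕ) : {w : List TD.T | Words.wt TD w ≤ G}.Finite := by
  apply Set.Finite.subset (finite_words (finite_trees G) G)
  intro w hw
  simp only [Set.mem_setOf_eq] at hw ⊢
  refine ⟨fun σ hσ => le_trans (size_le_wt hσ) hw, le_trans (length_le_wt w) hw⟩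

lemma psi_support_finite [Finite A] (p : TD.H) :
    (Function.support (psi CK p)).Finite := by
  apply Set.Finite.subset (finite_wt_le (p.support.sup TD.grade))
  intro w hw
  rw [Function.mem_support] at hw
  simp only [Set.mem_setOf_eq]
  by_contra hG
  apply hw
  show ell CK w p = 0
  conv_lhs => rw [MvPolynomial.as_sum p]
  rw [map_sum]
  apply Finset.sum_eq_zero
  intro m hm
  have h1 : MvPolynomial.monomial m (MvPolynomial.coeff m p) =
      MvPolynomial.coeff m p • TD.mono m := by
    rw [TreeData.mono, MvPolynomial.smul_monomial, smul_eq_mul, mul_one]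
  rw [h1, map_smul, smul_eq_mul]
  have hne : Words.wt TD w ≠ TD.grade m := by
    have : TD.grade m ≤ p.support.sup TD.grade := Finset.le_sup hm
    omega
  rw [ell_grade CK w m hne, mul_zero]

end Finiteness

section TreeValue

lemma eps_Bplus (a : A) (y : TD.H) : MvPolynomial.coeff 0 (TD.Bplus a y) = 0 := by
  have h : (coeffL 0).comp (TD.Bplus a) = (0 : TD.H →ₗ[ℝ] ℝ) := by
    apply (MvPolynomial.basisMonomials TD.T ℝ).ext
    intro m
    have hb : (MvPolynomial.basisMonomials TD.T ℝ) m = TD.mono m := by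
      rw [MvPolynomial.coe_basisMonomials]
      rfl
    rw [LinearMap.comp_apply, hb, Bplus_mono, coeffL_apply, TreeData.mono,
      MvPolynomial.coeff_monomial, LinearMap.zero_apply,
      if_neg (fun he => one_ne_zero (Finsupp.single_eq_zero.mp he))]
  exact LinearMap.congr_fun h y

lemma Phi_eps_right_lTensor (f : TD.H →ₗ[ℝ] ℝ) (a : A) (t : TD.H ⊗[ℝ] TD.H) :
    Phi f (coeffL 0) (LinearMap.lTensor TD.H (TD.Bplus a) t) = 0 := by
  induction t using TensorProduct.induction_on with
  | zero => simp
  | tmul x y =>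
    rw [LinearMap.lTensor_tmul, Phi_tmul, coeffL_apply, eps_Bplus, mul_zero]
  | add u v hu hv => rw [map_add, map_add, hu, hv, add_zero]

lemma conv_eps_right_X (f : TD.H →ₗ[ℝ] ℝ) (m : TD.T →₀ ℕ) (a : A) :
    Phi f (coeffL 0) (CK.Δ (X (TD.attach m a) : TD.H)) = f (X (TD.attach m a)) := by
  rw [X_attach, CK.Δ_Bplus, map_add, Phi_tmul, Phi_eps_right_lTensor, add_zero,
    coeffL_apply, MvPolynomial.coeff_zero_one, mul_one]

lemma ell_single_X (σ τ : TD.T) :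
    ell CK [σ] (X τ : TD.H) = MvPolynomial.coeff (Finsupp.single σ 1) (X τ : TD.H) := by
  obtain ⟨⟨m, a⟩, hp⟩ := TD.attach_bijective.surjective τ
  simp only [] at hp
  subst hp
  rw [ell_cons, ell_nil, conv_eps_right_X, coeffL_apply]

end TreeValue


end HKPsi


/-! ### STATEMENT 10
There exists a graded morphism of Hopf algebras `ψ : (ℋ,·,Δ) → (T(ℬ),⧢,Δ̄)` such that
for every `n ≥ 1` and every tree `τ` with `|τ| ≤ n`, `ψ(τ) = τ + ψ_{n−1}(τ)`, where
`ψ_{n−1}` is `ψ` composed with the projection onto `T(ℬ_{n−1})`. -/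
theorem stmt_10 {d : ℕ} (hd : 1 ≤ d) (TD : TreeData (Fin d)) (CK : CKCoproduct TD) :
    ∃ ψ : TD.H →ₗ[ℝ] (List TD.T → ℝ), CK.IsPsi ψ := by
  classical
  refine ⟨HKPsi.psi CK, ?_, ?_, ?_, ?_, ?_, ?_⟩
  · -- ψ 1 = unitW
    funext w
    cases w with
    | nil =>
      show HKPsi.ell CK [] 1 = Words.unitW []
      rw [HKPsi.ell_nil, HKPsi.coeffL_apply, MvPolynomial.coeff_zero_one]
      simp [Words.unitW]
    | cons σ v =>
      show HKPsi.ell CK (σ :: v) 1 = Words.unitW (σ :: v)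
      rw [HKPsi.ell_cons, map_one, Algebra.TensorProduct.one_def, HKPsi.Phi_tmul,
        HKPsi.coeffL_apply, MvPolynomial.coeff_one,
        if_neg (fun h => one_ne_zero (Finsupp.single_eq_zero.mp h.symm)), zero_mul]
      simp [Words.unitW]
  · -- finite support
    exact fun p => HKPsi.psi_support_finite CK p
  · -- grading
    exact fun m w h => HKPsi.ell_grade CK w m h
  · -- shuffle morphism
    intro p q
    funext w
    show HKPsi.ell CK w (p * q) = Words.shufW (HKPsi.psi CK p) (HKPsi.psi CK q) w
    rw [HKPsi.ell_mul]
    rfl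
  · -- deconcatenation morphism
    intro p u v
    have h1 : (LinearMap.proj (R := ℝ) (φ := fun _ : List TD.T => ℝ) u).comp (HKPsi.psi CK) =
        HKPsi.ell CK u := LinearMap.proj_pi _ u
    have h2 : (LinearMap.proj (R := ℝ) (φ := fun _ : List TD.T => ℝ) v).comp (HKPsi.psi CK) =
        HKPsi.ell CK v := LinearMap.proj_pi _ v
    rw [h1, h2]
    exact HKPsi.ell_append CK u v p
  · -- tree values
    intro n τ hτn w hw
    obtain ⟨σ, hσw, hσn⟩ := hw
    show HKPsi.ell CK w (TD.mono (Finsupp.single τ 1)) = _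
    by_cases hwτ : w = [τ]
    · subst hwτ
      rw [if_pos rfl, ← HKPsi.X_eq_mono, HKPsi.ell_single_X, HKPsi.X_eq_mono,
        TreeData.mono, MvPolynomial.coeff_monomial, if_pos rfl]
    · rw [if_neg hwτ]
      by_cases hg : Words.wt TD w = TD.grade (Finsupp.single τ 1)
      · have hgr : TD.grade (Finsupp.single τ 1) = TD.size τ := by
          rw [HKPsi.grade_single, one_mul]
        have hwt : Words.wt TD w = TD.size τ := by rw [hg, hgr]
        obtain ⟨w₁, w₂, rfl⟩ := List.append_of_mem hσw
        have h1 : Words.wt TD (w₁ ++ σ :: w₂) =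
            Words.wt TD w₁ + (TD.size σ + Words.wt TD w₂) := by
          rw [HKPsi.wt_append, HKPsi.wt_cons]
        have hw1 : w₁ = [] := HKPsi.wt_eq_zero (by omega)
        have hw2 : w₂ = [] := HKPsi.wt_eq_zero (by omega)
        subst hw1
        subst hw2
        simp only [List.nil_append] at hwτ ⊢
        rw [← HKPsi.X_eq_mono, HKPsi.ell_single_X, HKPsi.X_eq_mono, TreeData.mono,
          MvPolynomial.coeff_monomial]
        rw [if_neg]
        intro he
        have : τ = σ := Finsupp.single_left_injective one_ne_zero he
        exact hwτ (by rw [this])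
      · exact HKPsi.ell_grade CK w _ hg
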